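/- Let φ : Δₙ → ℝ be differentiable and exponentially concave, and define π_i(p) = p_i (1 + ∇φ(p)·(e⁽ⁱ⁾ − p)) for i = 1,…,n, where e⁽ⁱ⁾ is the i-th standard basis vector. Then π(p) lies in the closed unit simplex: π_i(p) ≥ 0 for all i and Σᵢ π_i(p) = 1. -/

import Mathlib

open Real Finset

/-- The open unit simplex in ℝⁿ. -/
def openSimplex (n : ℕ) : Set (Fin n → ℝ) :=
  {p | (∀ i, 0 < p i) ∧ ∑ i, p i = 1}

/-- Key inequality: for `p, q` in the open simplex, the tangent-line bound coming
from concavity of `exp ∘ φ` gives `0 < 1 + ∇φ(p)·(q − p)`. -/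
lemma portfolio_key (n : ℕ) (φf : (Fin n → ℝ) → ℝ)
    (g : (Fin n → ℝ) → (Fin n → ℝ))
    (hconc : ConcaveOn ℝ (openSimplex n) (fun p => Real.exp (φf p)))
    (hgrad : ∀ p ∈ openSimplex n, ∀ q ∈ openSimplex n,
      HasDerivAt (fun t : ℝ => φf (p + t • (q - p))) (∑ i, g p i * (q i - p i)) 0)
    (p : Fin n → ℝ) (hp : p ∈ openSimplex n) (q : Fin n → ℝ) (hq : q ∈ openSimplex n) :
    0 < 1 + ∑ i, g p i * (q i - p i) := by
  set D : ℝ := ∑ i, g p i * (q i - p i) with hD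
  have hline : ∀ t : ℝ, p + t • (q - p) = (1 - t) • p + t • q := by
    intro t; funext j
    simp only [Pi.add_apply, Pi.smul_apply, Pi.sub_apply, smul_eq_mul]
    ring
  -- derivative of h(t) = exp(φ(p + t(q-p))) at 0
  have hder : HasDerivAt (fun t : ℝ => Real.exp (φf (p + t • (q - p))))
      (Real.exp (φf p) * D) 0 := by
    have := (hgrad p hp q hq).exp
    simpa using this
  -- concavity: slope bound on (0,1)
  have hslope : ∀ t ∈ Set.Ioo (0:ℝ) 1,
      Real.exp (φf q) - Real.exp (φf p) ≤ slope (fun t : ℝ => Real.exp (φf (p + t • (q - p)))) 0 t := by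
    intro t ht
    obtain ⟨ht0, ht1⟩ := ht
    have hc := hconc.2 hp hq (by linarith : (0:ℝ) ≤ 1 - t) (le_of_lt ht0) (by ring)
    rw [← hline t] at hc
    simp only [smul_eq_mul] at hc
    have h0 : p + (0:ℝ) • (q - p) = p := by simp
    rw [slope_def_field, h0, sub_zero, le_div_iff₀ ht0]
    nlinarith
  -- tendsto of slope to derivative along 𝓝[>]0
  have htend : Filter.Tendsto (slope (fun t : ℝ => Real.exp (φf (p + t • (q - p)))) 0)
      (nhdsWithin 0 (Set.Ioi 0)) (nhds (Real.exp (φf p) * D)) := by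
    have := hasDerivAt_iff_tendsto_slope.mp hder
    exact this.mono_left (nhdsWithin_mono 0 (fun x hx => ne_of_gt hx))
  have hIoo : Set.Ioo (0:ℝ) 1 ∈ nhdsWithin (0:ℝ) (Set.Ioi 0) :=
    Ioo_mem_nhdsGT_of_mem (by constructor <;> norm_num)
  have hle : Real.exp (φf q) - Real.exp (φf p) ≤ Real.exp (φf p) * D := by
    refine ge_of_tendsto htend ?_
    filter_upwards [hIoo] with t ht using hslope t ht
  nlinarith [Real.exp_pos (φf q), Real.exp_pos (φf p)]

/-- The portfolio map `πᵢ(p) = pᵢ(1 + ∇φ(p)·(e⁽ⁱ⁾ − p))` generated by a differentiable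
exponentially concave function `φ` (with gradient `g`) takes values in the closed unit
simplex: all weights are nonnegative and they sum to 1. -/
theorem portfolio_map_mem_closed_simplex (n : ℕ) (φf : (Fin n → ℝ) → ℝ)
    (g : (Fin n → ℝ) → (Fin n → ℝ))
    (hconc : ConcaveOn ℝ (openSimplex n) (fun p => Real.exp (φf p)))
    (hgrad : ∀ p ∈ openSimplex n, ∀ q ∈ openSimplex n,
      HasDerivAt (fun t : ℝ => φf (p + t • (q - p))) (∑ i, g p i * (q i - p i)) 0) :
    ∀ p ∈ openSimplex n,
      (∀ i, 0 ≤ p i * (1 + ∑ j, g p j * ((if j = i then (1:ℝ) else 0) - p j))) ∧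
      ∑ i, p i * (1 + ∑ j, g p j * ((if j = i then (1:ℝ) else 0) - p j)) = 1 := by
  intro p hp
  obtain ⟨hppos, hpsum⟩ := hp
  constructor
  · -- nonnegativity
    intro i
    set S : ℝ := ∑ j, g p j * ((if j = i then (1:ℝ) else 0) - p j) with hS
    have key : ∀ ε : ℝ, ε ∈ Set.Ioo (0:ℝ) 1 → 0 < 1 + ε * S := by
      intro ε ⟨hε0, hε1⟩
      set q : Fin n → ℝ := fun j => p j + ε * ((if j = i then (1:ℝ) else 0) - p j) with hqdef
      have hq : q ∈ openSimplex n := by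
        constructor
        · intro j
          simp only [hqdef]
          by_cases hji : j = i
          · subst hji; rw [if_pos rfl]; nlinarith [hppos j]
          · simp only [if_neg hji]; nlinarith [hppos j]
        · simp only [hqdef]
          rw [Finset.sum_add_distrib, hpsum, ← Finset.mul_sum, Finset.sum_sub_distrib, hpsum]
          simp
      have hqp : ∀ j, q j - p j = ε * ((if j = i then (1:ℝ) else 0) - p j) := by
        intro j; simp [hqdef]
      have hkey := portfolio_key n φf g hconc hgrad p ⟨hppos, hpsum⟩ q hq
      have hDS : ∑ j, g p j * (q j - p j) = ε * S := by
        rw [hS, Finset.mul_sum]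
        refine Finset.sum_congr rfl fun j _ => ?_
        rw [hqp j]; ring
      rw [hDS] at hkey
      exact hkey
    have hS0 : 0 ≤ 1 + S := by
      by_contra hcon
      push_neg at hcon
      have hSneg : S < -1 := by linarith
      have hSne : S ≠ 0 := by intro h; rw [h] at hSneg; norm_num at hSneg
      have h1 : -1 < 1 / S := by
        rw [lt_div_iff_of_neg (by linarith : S < 0)]; linarith
      have h2 : 1 / S < 0 := div_neg_of_pos_of_neg one_pos (by linarith)
      have hεmem : (1 - 1/S)/2 ∈ Set.Ioo (0:ℝ) 1 := by
        constructor <;> [linarith; linarith]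
      have := key _ hεmem
      have heq : (1 - 1/S)/2 * S = (S - 1)/2 := by
        field_simp
      rw [heq] at this
      linarith
    have := hppos i
    nlinarith
  · -- sum equals 1
    have expand : ∀ i, p i * (1 + ∑ j, g p j * ((if j = i then (1:ℝ) else 0) - p j))
        = p i + p i * g p i - p i * (∑ j, g p j * p j) := by
      intro i
      have h : ∑ j, g p j * ((if j = i then (1:ℝ) else 0) - p j)
          = g p i - ∑ j, g p j * p j := by
        simp [mul_sub, Finset.sum_sub_distrib, mul_ite, mul_one, mul_zero]
      rw [h]; ring
    simp_rw [expand]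
    rw [Finset.sum_sub_distrib, Finset.sum_add_distrib, hpsum, ← Finset.sum_mul, hpsum, one_mul]
    have : ∑ i, p i * g p i = ∑ j, g p j * p j := by
      exact Finset.sum_congr rfl fun j _ => mul_comm _ _
    rw [this]; ring
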